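/- Suppose the linear map Θ : E → E/T ⊕ E/U, v ↦ (v + T, v + U), is an isomorphism. Then the following three assertions are equivalent: (i) the graded linear map gr Θ̄ : gr T → gr(E/U) is an isomorphism; (ii) dim(Tⁿ) = dim((E/U)ⁿ) for every n ≥ 0; (iii) δ = 0. (Lemma 9.2 of the paper.) -/

import Mathlib

open Module Submodule

private lemma aux_exists_le {M : Type*} [AddCommGroup M] [Module ℂ M]
    (F : ℕ → Submodule ℂ M) (hFmono : Monotone F)
    (S : Submodule ℂ M) (hS : S.FG) (h : S ≤ ⨆ n, F n) : ∃ N, S ≤ F N := by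
  have hc := (Submodule.fg_iff_compact S).mp hS
  rw [CompleteLattice.isCompactElement_iff_le_of_directed_sSup_le] at hc
  obtain ⟨x, ⟨N, rfl⟩, hx⟩ := hc (Set.range F) (Set.range_nonempty F)
    (directedOn_range.mpr hFmono.directed_le) (by rwa [sSup_range])
  exact ⟨N, hx⟩

private lemma aux_abel (a b : ℕ → ℤ) (M : ℕ) :
    ∑ n ∈ Finset.range (M + 1), (n : ℤ) * ((a n - a (n - 1)) - (b n - b (n - 1))) =
      (M : ℤ) * (a M - b M) - ∑ n ∈ Finset.range M, (a n - b n) := by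
  induction M with
  | zero => simp
  | succ M ih =>
    rw [Finset.sum_range_succ, ih, Finset.sum_range_succ, Nat.add_sub_cancel]
    push_cast; ring

theorem grTheta_iso_iff_dim_eq_iff_delta_zero
    (E : Type*) [AddCommGroup E] [Module ℂ E]
    (F : ℕ → Submodule ℂ E) (hFmono : Monotone F)
    (hF0 : F 0 = ⊥) (hFtop : (⨆ n, F n) = ⊤)
    (T U : Submodule ℂ E)
    [FiniteDimensional ℂ T] [FiniteDimensional ℂ (E ⧸ U)]
    (hdim : Module.finrank ℂ T = Module.finrank ℂ (E ⧸ U))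
    (hΘ : Function.Bijective (LinearMap.prod T.mkQ U.mkQ)) :
    let a : ℕ → ℤ := fun n => Module.finrank ℂ ↥(F n ⊓ T)
    let b : ℕ → ℤ := fun n => Module.finrank ℂ ↥((F n).map U.mkQ)
    let δ : ℤ := ∑ᶠ n : ℕ, (n : ℤ) * ((a n - a (n - 1)) - (b n - b (n - 1)))
    let grIso : Prop := ∀ n : ℕ,
      ((F (n + 1)).map U.mkQ ≤ ((F n).map U.mkQ) ⊔ ((F (n + 1) ⊓ T).map U.mkQ)) ∧
      (∀ x : E, x ∈ F (n + 1) ⊓ T → U.mkQ x ∈ (F n).map U.mkQ → x ∈ F n)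
    (grIso ↔ ∀ n : ℕ, a n = b n) ∧ ((∀ n : ℕ, a n = b n) ↔ δ = 0) := by
  intro a b δ grIso
  classical
  have ha : ∀ n, a n = ((Module.finrank ℂ ↥(F n ⊓ T) : ℕ) : ℤ) := fun _ => rfl
  have hb : ∀ n, b n = ((Module.finrank ℂ ↥((F n).map U.mkQ) : ℕ) : ℤ) := fun _ => rfl
  -- disjointness of T and U
  have hdisj : ∀ x : E, x ∈ T → x ∈ U → x = 0 := by
    intro x hxT hxU
    have hx : (LinearMap.prod T.mkQ U.mkQ) x = (LinearMap.prod T.mkQ U.mkQ) 0 := by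
      simp [LinearMap.prod_apply, Submodule.mkQ_apply, Submodule.Quotient.mk_eq_zero, hxT, hxU]
    exact hΘ.1 hx
  -- injectivity of T → E/U
  have hφ : Function.Injective (U.mkQ ∘ₗ T.subtype) := by
    intro x y hxy
    have hxy' : Submodule.Quotient.mk (p := U) (x : E) = Submodule.Quotient.mk (y : E) := hxy
    have h1 : (x : E) - y ∈ U := (Submodule.Quotient.eq U).mp hxy'
    have h2 : (x : E) - y ∈ T := sub_mem x.2 y.2
    exact Subtype.ext (sub_eq_zero.mp (hdisj _ h2 h1))
  -- rank of image of a submodule of T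
  have hrank : ∀ W : Submodule ℂ E, W ≤ T →
      Module.finrank ℂ W = Module.finrank ℂ (W.map U.mkQ) := by
    intro W hW
    have h1 : W.map U.mkQ = (W.comap T.subtype).map (U.mkQ ∘ₗ T.subtype) := by
      rw [Submodule.map_comp, Submodule.map_comap_subtype, inf_eq_right.mpr hW]
    calc Module.finrank ℂ W
        = Module.finrank ℂ (W.comap T.subtype) :=
          (Submodule.comapSubtypeEquivOfLe hW).finrank_eq.symm
      _ = Module.finrank ℂ ((W.comap T.subtype).map (U.mkQ ∘ₗ T.subtype)) :=
          (Submodule.equivMapOfInjective _ hφ _).finrank_eq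
      _ = Module.finrank ℂ (W.map U.mkQ) := by rw [← h1]
  have hab : ∀ n, a n ≤ b n := by
    intro n
    rw [ha, hb, hrank _ inf_le_right]
    exact_mod_cast Submodule.finrank_mono (Submodule.map_mono inf_le_left)
  -- (ii) in terms of submodule equalities
  have key : (∀ n, a n = b n) ↔ ∀ n, (F n ⊓ T).map U.mkQ = (F n).map U.mkQ := by
    constructor
    · intro h n
      refine Submodule.eq_of_le_of_finrank_eq (Submodule.map_mono inf_le_left) ?_
      have h' := h n
      rw [ha, hb, hrank _ inf_le_right] at h'
      exact_mod_cast h'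
    · intro h n
      rw [ha, hb, hrank _ inf_le_right, h n]
  -- (i) in terms of submodule equalities
  have hgr : grIso ↔ ∀ n, (F n ⊓ T).map U.mkQ = (F n).map U.mkQ := by
    constructor
    · intro hg n
      induction n with
      | zero => rw [hF0]; simp
      | succ n ih =>
        refine le_antisymm (Submodule.map_mono inf_le_left) ?_
        refine le_trans (hg n).1 ?_
        rw [← ih]
        exact sup_le (Submodule.map_mono (inf_le_inf_right T (hFmono (Nat.le_succ n)))) le_rfl
    · intro h n
      constructor
      · rw [← h (n + 1)]; exact le_sup_right
      · intro x hx hmem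
        rw [← h n] at hmem
        obtain ⟨y, hy, hxy⟩ := Submodule.mem_map.mp hmem
        have hxy' : Submodule.Quotient.mk (p := U) y = Submodule.Quotient.mk x := hxy
        have h1 : y - x ∈ U := (Submodule.Quotient.eq U).mp hxy'
        have h2 : y - x ∈ T := sub_mem hy.2 hx.2
        have h3 : y = x := sub_eq_zero.mp (hdisj _ h2 h1)
        exact h3 ▸ hy.1
  -- stabilization
  obtain ⟨N₁, hN₁⟩ := aux_exists_le F hFmono T (Module.Finite.iff_fg.mp inferInstance)
    (hFtop ▸ le_top)
  have htop : (⨆ n, (F n).map U.mkQ) = ⊤ := by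
    rw [← Submodule.map_iSup, hFtop, Submodule.map_top, Submodule.range_mkQ]
  obtain ⟨N₂, hN₂⟩ := aux_exists_le (fun n => (F n).map U.mkQ)
    (fun i j hij => Submodule.map_mono (hFmono hij)) ⊤
    (Module.finite_def.mp inferInstance) (le_of_eq htop.symm)
  set N₀ : ℕ := max N₁ N₂ with hN₀def
  have hstab : ∀ n, N₀ ≤ n → a n = b n := by
    intro n hn
    have h1 : N₁ ≤ n := le_trans (le_max_left _ _) hn
    have h2 : N₂ ≤ n := le_trans (le_max_right _ _) hn
    have hT : F n ⊓ T = T := inf_eq_right.mpr (hN₁.trans (hFmono h1))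
    have hU : (F n).map U.mkQ = ⊤ :=
      le_antisymm le_top (hN₂.trans (Submodule.map_mono (hFmono h2)))
    rw [ha, hb, hT, hU, finrank_top, hdim]
  -- δ = - ∑ (a n - b n)
  have hδeq : δ = -∑ n ∈ Finset.range (N₀ + 1), (a n - b n) := by
    have h1 : δ = ∑ n ∈ Finset.range ((N₀ + 1) + 1),
        (n : ℤ) * ((a n - a (n - 1)) - (b n - b (n - 1))) := by
      refine finsum_eq_sum_of_support_subset _ ?_
      intro n hn
      simp only [Function.mem_support] at hn
      by_contra hcon
      simp only [Finset.coe_range, Set.mem_Iio, not_lt] at hcon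
      apply hn
      have e1 : a n = b n := hstab n (by omega)
      have e2 : a (n - 1) = b (n - 1) := hstab (n - 1) (by omega)
      rw [e1, e2]; ring
    rw [h1, aux_abel, sub_eq_zero.mpr (hstab (N₀ + 1) (by omega)), mul_zero, zero_sub]
  refine ⟨hgr.trans key.symm, ?_, ?_⟩
  · intro h
    rw [hδeq]
    have : ∀ n ∈ Finset.range (N₀ + 1), a n - b n = 0 := fun n _ => sub_eq_zero.mpr (h n)
    rw [Finset.sum_eq_zero this, neg_zero]
  · intro h n
    rw [hδeq, neg_eq_zero] at h
    have hall := (Finset.sum_eq_zero_iff_of_nonpos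
      (fun i _ => sub_nonpos.mpr (hab i))).mp h
    by_cases hn : n < N₀ + 1
    · exact sub_eq_zero.mp (hall n (Finset.mem_range.mpr hn))
    · exact hstab n (by omega)
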